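/- Let r₁ < 0, x₀ > 0, y₀ > 0, and U = (0, x₀] × [−y₀, y₀]. Let v : U → ℂ be continuously differentiable and set f(x, y) = x ∂_x v(x, y) + r₁ y ∂_y v(x, y). Suppose s > 0 and there is C ≥ 0 with |f(x, y)| ≤ C x^s and |∂_y f(x, y)| ≤ C x^s for all (x, y) ∈ U. Then there exists a constant a₀ ∈ ℂ such that for every r′ < min(−r₁, s) there is C′ ≥ 0 with |v(x, y) − a₀| ≤ C′ x^{r′} for all (x, y) ∈ U. In particular v extends continuously to x = 0 with constant boundary value a₀. -/

import Mathlib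

/-- part (ii) of the transport lemma at an outgoing saddle. If
`v` is `C¹` on `U = (0,x₀] × [−y₀,y₀]` and `f = x ∂ₓv + r₁ y ∂_y v` satisfies
`|f| ≤ C x^s` and `|∂_y f| ≤ C x^s` with `s > 0`, then there is a constant
`a₀` with `|v − a₀| ≤ C′ x^{r′}` on `U` for every `r′ < min(−r₁, s)`; in
particular `v` extends continuously to `x = 0` with boundary value `a₀`. -/
theorem stmt_15 (r₁ x₀ y₀ : ℝ) (hr : r₁ < 0) (hx : 0 < x₀) (hy : 0 < y₀)
    (v f : ℝ × ℝ → ℂ) (Dv : ℝ × ℝ → (ℝ × ℝ →L[ℝ] ℂ)) (fy : ℝ × ℝ → ℂ)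
    (hdiff : ∀ p ∈ Set.Ioc (0 : ℝ) x₀ ×ˢ Set.Icc (-y₀) y₀, HasFDerivAt v (Dv p) p)
    (hcont : ContinuousOn Dv (Set.Ioc (0 : ℝ) x₀ ×ˢ Set.Icc (-y₀) y₀))
    (hfdef : ∀ p ∈ Set.Ioc (0 : ℝ) x₀ ×ˢ Set.Icc (-y₀) y₀,
      f p = (p.1 : ℂ) * Dv p (1, 0) + (r₁ : ℂ) * (p.2 : ℂ) * Dv p (0, 1))
    (hfy : ∀ p ∈ Set.Ioc (0 : ℝ) x₀ ×ˢ Set.Icc (-y₀) y₀,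
      HasDerivAt (fun y => f (p.1, y)) (fy p) p.2)
    (s : ℝ) (hs : 0 < s) (C : ℝ) (hC : 0 ≤ C)
    (hf : ∀ p ∈ Set.Ioc (0 : ℝ) x₀ ×ˢ Set.Icc (-y₀) y₀, ‖f p‖ ≤ C * p.1 ^ s)
    (hfyb : ∀ p ∈ Set.Ioc (0 : ℝ) x₀ ×ˢ Set.Icc (-y₀) y₀, ‖fy p‖ ≤ C * p.1 ^ s) :
    ∃ a₀ : ℂ,
      (∀ r' : ℝ, r' < min (-r₁) s → ∃ C' : ℝ, 0 ≤ C' ∧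
        ∀ p ∈ Set.Ioc (0 : ℝ) x₀ ×ˢ Set.Icc (-y₀) y₀,
          ‖v p - a₀‖ ≤ C' * p.1 ^ r') ∧
      ∀ y ∈ Set.Icc (-y₀) y₀,
        Filter.Tendsto (fun x => v (x, y)) (nhdsWithin 0 (Set.Ioi 0)) (nhds a₀) := by
  have h0mem : (0:ℝ) ∈ Set.Icc (-y₀) y₀ := ⟨by linarith, by linarith⟩
  -- continuity of f on U
  have hfc : ContinuousOn f (Set.Ioc (0 : ℝ) x₀ ×ˢ Set.Icc (-y₀) y₀) := by
    have h1 : ContinuousOn (fun p : ℝ × ℝ => Dv p (1, 0)) (Set.Ioc (0 : ℝ) x₀ ×ˢ Set.Icc (-y₀) y₀) :=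
      (ContinuousLinearMap.apply ℝ ℂ ((1:ℝ), (0:ℝ))).continuous.comp_continuousOn hcont
    have h2 : ContinuousOn (fun p : ℝ × ℝ => Dv p (0, 1)) (Set.Ioc (0 : ℝ) x₀ ×ˢ Set.Icc (-y₀) y₀) :=
      (ContinuousLinearMap.apply ℝ ℂ ((0:ℝ), (1:ℝ))).continuous.comp_continuousOn hcont
    refine ContinuousOn.congr (ContinuousOn.add ?_ ?_) hfdef
    · exact ((Complex.continuous_ofReal.comp continuous_fst).continuousOn).mul h1
    · exact ((continuous_const.mul (Complex.continuous_ofReal.comp continuous_snd)).continuousOn).mul h2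
  -- membership of points on characteristics
  have hmem : ∀ x y ξ : ℝ, 0 < x → x ≤ x₀ → y ∈ Set.Icc (-y₀) y₀ → ξ ∈ Set.Icc x x₀ →
      (ξ, y * (ξ / x) ^ r₁) ∈ Set.Ioc (0 : ℝ) x₀ ×ˢ Set.Icc (-y₀) y₀ := by
    intro x y ξ hx0 hxx hyI hξ
    obtain ⟨hξ1, hξ2⟩ := hξ
    have hξ0 : 0 < ξ := lt_of_lt_of_le hx0 hξ1
    constructor
    · exact ⟨hξ0, hξ2⟩
    · have hb1 : (1:ℝ) ≤ ξ / x := (one_le_div hx0).2 hξ1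
      have hθ : (ξ / x) ^ r₁ ≤ 1 := Real.rpow_le_one_of_one_le_of_nonpos hb1 hr.le
      have hθ0 : 0 ≤ (ξ / x) ^ r₁ := Real.rpow_nonneg (by positivity) _
      have hya : |y| ≤ y₀ := abs_le.2 hyI
      have : |y * (ξ / x) ^ r₁| ≤ y₀ := by
        rw [abs_mul, abs_of_nonneg hθ0]
        calc |y| * (ξ / x) ^ r₁ ≤ y₀ * 1 := mul_le_mul hya hθ hθ0 hy.le
          _ = y₀ := mul_one _
      exact abs_le.1 this
  -- integrability of integrand along characteristics
  have hint : ∀ x y : ℝ, 0 < x → x ≤ x₀ → y ∈ Set.Icc (-y₀) y₀ →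
      IntervalIntegrable (fun ξ : ℝ => f (ξ, y * (ξ / x) ^ r₁) / (ξ : ℂ))
        MeasureTheory.volume x x₀ := by
    intro x y hx0 hxx hyI
    apply ContinuousOn.intervalIntegrable
    rw [Set.uIcc_of_le hxx]
    have hc : ContinuousOn (fun ξ : ℝ => (ξ, y * (ξ / x) ^ r₁)) (Set.Icc x x₀) := by
      apply ContinuousOn.prodMk continuousOn_id
      apply ContinuousOn.mul continuousOn_const
      intro ξ hξ
      have hξ0 : 0 < ξ := lt_of_lt_of_le hx0 hξ.1
      exact (ContinuousAt.rpow_const (by fun_prop) (Or.inl (by positivity))).continuousWithinAt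
    apply ContinuousOn.div
    · exact hfc.comp hc (fun ξ hξ => hmem x y ξ hx0 hxx hyI hξ)
    · exact Complex.continuous_ofReal.continuousOn
    · intro ξ hξ
      exact_mod_cast (lt_of_lt_of_le hx0 hξ.1).ne'
  -- FTC along characteristics
  have key : ∀ x y : ℝ, 0 < x → x ≤ x₀ → y ∈ Set.Icc (-y₀) y₀ →
      v (x₀, y * (x₀ / x) ^ r₁) - v (x, y)
        = ∫ ξ in x..x₀, f (ξ, y * (ξ / x) ^ r₁) / (ξ : ℂ) := by
    intro x y hx0 hxx hyI
    have hderiv : ∀ ξ ∈ Set.uIcc x x₀,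
        HasDerivAt (fun ξ : ℝ => v (ξ, y * (ξ / x) ^ r₁))
          (f (ξ, y * (ξ / x) ^ r₁) / (ξ : ℂ)) ξ := by
      rw [Set.uIcc_of_le hxx]
      intro ξ hξ
      have hξ0 : 0 < ξ := lt_of_lt_of_le hx0 hξ.1
      have hb : 0 < ξ / x := by positivity
      have h1 : HasDerivAt (fun ξ : ℝ => (ξ / x) ^ r₁) (r₁ * (ξ / x) ^ r₁ / ξ) ξ := by
        have hd : HasDerivAt (fun ξ : ℝ => ξ / x) (1 / x) ξ := by
          simpa using (hasDerivAt_id ξ).div_const x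
        have := (Real.hasDerivAt_rpow_const (x := ξ / x) (p := r₁) (Or.inl hb.ne')).comp ξ hd
        refine this.congr_deriv ?_
        symm
        rw [Real.rpow_sub hb, Real.rpow_one]
        field_simp
      have hcurve : HasDerivAt (fun ξ : ℝ => ((ξ : ℝ), y * (ξ / x) ^ r₁))
          ((1 : ℝ), y * (r₁ * (ξ / x) ^ r₁ / ξ)) ξ :=
        (hasDerivAt_id ξ).prodMk (h1.const_mul y)
      have hpm := hmem x y ξ hx0 hxx hyI hξ
      have hcomp := (hdiff _ hpm).comp_hasDerivAt ξ hcurve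
      refine hcomp.congr_deriv (Eq.symm ?_)
      have hsplit : ((1 : ℝ), y * (r₁ * (ξ / x) ^ r₁ / ξ))
          = ((1 : ℝ), (0 : ℝ)) + (y * (r₁ * (ξ / x) ^ r₁ / ξ)) • ((0 : ℝ), (1 : ℝ)) := by
        simp [Prod.ext_iff]
      rw [hsplit, map_add, map_smul, hfdef _ hpm]
      have hξc : (ξ : ℂ) ≠ 0 := by exact_mod_cast hξ0.ne'
      simp only [smul_eq_mul, Complex.real_smul]
      push_cast
      field_simp
    have := intervalIntegral.integral_eq_sub_of_hasDerivAt hderiv (hint x y hx0 hxx hyI)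
    rw [this, div_self hx0.ne', Real.one_rpow, mul_one]
  -- the function on the axis
  set φ : ℝ → ℂ := fun ξ => f (ξ, 0) / (ξ : ℂ) with hφdef
  have hφcont : ContinuousOn φ (Set.Ioc 0 x₀) := by
    apply ContinuousOn.div
    · exact hfc.comp (continuousOn_id.prodMk continuousOn_const) (fun ξ hξ => ⟨hξ, h0mem⟩)
    · exact Complex.continuous_ofReal.continuousOn
    · intro ξ hξ; exact_mod_cast hξ.1.ne'
  have hφbd : ∀ ξ ∈ Set.Ioc (0:ℝ) x₀, ‖φ ξ‖ ≤ C * ξ ^ (s - 1) := by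
    intro ξ hξ
    have hξ0 : 0 < ξ := hξ.1
    have h : ‖φ ξ‖ = ‖f (ξ, 0)‖ / ξ := by
      rw [hφdef]; simp [norm_div, Complex.norm_real, abs_of_pos hξ0]
    rw [h, Real.rpow_sub hξ0, Real.rpow_one, ← mul_div_assoc]
    gcongr
    exact hf (ξ, 0) ⟨hξ, h0mem⟩
  have hbint : MeasureTheory.IntegrableOn (fun ξ : ℝ => C * ξ ^ (s - 1)) (Set.Ioc (0:ℝ) x₀) := by
    have := (intervalIntegral.intervalIntegrable_rpow' (a := 0) (b := x₀)
      (r := s - 1) (by linarith)).const_mul C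
    rwa [intervalIntegrable_iff_integrableOn_Ioc_of_le hx.le] at this
  have hφint : MeasureTheory.IntegrableOn φ (Set.Ioc (0:ℝ) x₀) := by
    apply MeasureTheory.Integrable.mono' hbint
      (hφcont.aestronglyMeasurable measurableSet_Ioc)
    exact (MeasureTheory.ae_restrict_iff' measurableSet_Ioc).2 (Filter.Eventually.of_forall hφbd)
  -- the candidate limit
  set a₀ : ℂ := v (x₀, 0) - ∫ ξ in Set.Ioc (0:ℝ) x₀, φ ξ with ha₀def
  -- bound on the tail
  have htail : ∀ x ∈ Set.Ioc (0:ℝ) x₀, ‖∫ ξ in Set.Ioc (0:ℝ) x, φ ξ‖ ≤ C / s * x ^ s := by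
    intro x hxI
    have hsub : Set.Ioc (0:ℝ) x ⊆ Set.Ioc (0:ℝ) x₀ := Set.Ioc_subset_Ioc_right hxI.2
    have h1 : ‖∫ ξ in Set.Ioc (0:ℝ) x, φ ξ‖ ≤ ∫ ξ in Set.Ioc (0:ℝ) x, C * ξ ^ (s-1) := by
      apply MeasureTheory.norm_integral_le_of_norm_le (hbint.mono_set hsub)
      exact (MeasureTheory.ae_restrict_iff' measurableSet_Ioc).2
        (Filter.Eventually.of_forall (fun ξ hξ => hφbd ξ (hsub hξ)))
    have h2 : ∫ ξ in Set.Ioc (0:ℝ) x, C * ξ ^ (s-1) = C / s * x ^ s := by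
      rw [← intervalIntegral.integral_of_le hxI.1.le,
        intervalIntegral.integral_const_mul, integral_rpow (Or.inl (by linarith))]
      rw [Real.zero_rpow (by linarith : s - 1 + 1 ≠ 0)]
      have h3 : s - 1 + 1 = s := by ring
      rw [h3]
      field_simp
      ring
    linarith [h1, h2.le, h2.ge]
  -- identity on the axis
  have hax : ∀ x ∈ Set.Ioc (0:ℝ) x₀, v (x, 0) - a₀ = ∫ ξ in Set.Ioc (0:ℝ) x, φ ξ := by
    intro x hxI
    have hk := key x 0 hxI.1 hxI.2 h0mem
    simp only [zero_mul] at hk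
    have hIoc : (∫ ξ in x..x₀, φ ξ) = ∫ ξ in Set.Ioc x x₀, φ ξ :=
      intervalIntegral.integral_of_le hxI.2
    have hunion : (∫ ξ in Set.Ioc (0:ℝ) x₀, φ ξ)
        = (∫ ξ in Set.Ioc (0:ℝ) x, φ ξ) + ∫ ξ in Set.Ioc x x₀, φ ξ := by
      rw [← MeasureTheory.setIntegral_union (Set.Ioc_disjoint_Ioc_of_le le_rfl) measurableSet_Ioc
        (hφint.mono_set (Set.Ioc_subset_Ioc_right hxI.2))
        (hφint.mono_set (Set.Ioc_subset_Ioc_left hxI.1.le)),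
        Set.Ioc_union_Ioc_eq_Ioc hxI.1.le hxI.2]
    rw [ha₀def]
    have : v (x₀, 0) - v (x, 0) = ∫ ξ in Set.Ioc x x₀, φ ξ := by rw [← hIoc]; exact hk
    rw [hunion]
    linear_combination -this
  -- mean value bound at x = x₀
  obtain ⟨M, hM⟩ : ∃ M : ℝ, ∀ p ∈ ({x₀} : Set ℝ) ×ˢ Set.Icc (-y₀) y₀, ‖Dv p (0, 1)‖ ≤ M := by
    apply IsCompact.exists_bound_of_continuousOn (isCompact_singleton.prod isCompact_Icc)
    exact (ContinuousLinearMap.apply ℝ ℂ ((0:ℝ), (1:ℝ))).continuous.comp_continuousOn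
      (hcont.mono (fun p hp => ⟨⟨by rw [hp.1]; exact hx, le_of_eq hp.1⟩, hp.2⟩))
  have hM0 : 0 ≤ M := le_trans (norm_nonneg _) (hM (x₀, 0) ⟨rfl, h0mem⟩)
  have hMv : ∀ a ∈ Set.Icc (-y₀) y₀, ‖v (x₀, a) - v (x₀, 0)‖ ≤ M * |a| := by
    intro a ha
    have := Convex.norm_image_sub_le_of_norm_hasDerivWithin_le
      (f := fun t => v (x₀, t)) (f' := fun t => Dv (x₀, t) (0, 1)) (s := Set.Icc (-y₀) y₀)
      (C := M) ?_ ?_ (convex_Icc _ _) h0mem ha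
    · simpa using this
    · intro t ht
      exact (((hdiff (x₀, t) ⟨⟨hx, le_refl _⟩, ht⟩).comp_hasDerivAt t
        ((hasDerivAt_const t x₀).prodMk (hasDerivAt_id t)))).hasDerivWithinAt
    · intro t ht
      exact hM (x₀, t) ⟨rfl, ht⟩
  -- mean value bound in y for f
  have hMf : ∀ ξ ∈ Set.Ioc (0:ℝ) x₀, ∀ a ∈ Set.Icc (-y₀) y₀,
      ‖f (ξ, a) - f (ξ, 0)‖ ≤ (C * ξ ^ s) * |a| := by
    intro ξ hξ a ha
    have := Convex.norm_image_sub_le_of_norm_hasDerivWithin_le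
      (f := fun t => f (ξ, t)) (f' := fun t => fy (ξ, t)) (s := Set.Icc (-y₀) y₀)
      (C := C * ξ ^ s) ?_ ?_ (convex_Icc _ _) h0mem ha
    · simpa using this
    · intro t ht
      exact (hfy (ξ, t) ⟨hξ, ht⟩).hasDerivWithinAt
    · intro t ht
      exact hfyb (ξ, t) ⟨hξ, ht⟩
  have hbound_all : ∀ r' : ℝ, r' < min (-r₁) s → ∃ C' : ℝ, 0 ≤ C' ∧
      ∀ p ∈ Set.Ioc (0 : ℝ) x₀ ×ˢ Set.Icc (-y₀) y₀, ‖v p - a₀‖ ≤ C' * p.1 ^ r' := by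
    intro r' hr'
    have hr1 : r' ≤ -r₁ := le_of_lt (lt_of_lt_of_le hr' (min_le_left _ _))
    have hrs : r' < s := lt_of_lt_of_le hr' (min_le_right _ _)
    refine ⟨M * y₀ / x₀ ^ r' + C * y₀ * x₀ ^ (s - r') / (s - r') + C / s * x₀ ^ (s - r'), ?_, ?_⟩
    · have p1 : (0:ℝ) < x₀ ^ r' := Real.rpow_pos_of_pos hx _
      have p2 : (0:ℝ) ≤ x₀ ^ (s - r') := (Real.rpow_pos_of_pos hx _).le
      have p3 : (0:ℝ) < s - r' := by linarith
      have := mul_nonneg (mul_nonneg hC hy.le) p2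
      positivity
    rintro ⟨x, y⟩ ⟨hxI, hyI⟩
    have hx0 : 0 < x := hxI.1
    have hxx : x ≤ x₀ := hxI.2
    have hsr : 0 < s - r' := by linarith
    have hxr'pos : (0:ℝ) < x ^ r' := Real.rpow_pos_of_pos hx0 _
    set yt : ℝ := y * (x₀ / x) ^ r₁ with hytdef
    have hytI : yt ∈ Set.Icc (-y₀) y₀ := (hmem x y x₀ hx0 hxx hyI ⟨hxx, le_refl _⟩).2
    have k1 := key x y hx0 hxx hyI
    have k2 := key x 0 hx0 hxx h0mem
    simp only [zero_mul] at k2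
    have hφii : IntervalIntegrable φ MeasureTheory.volume x x₀ := by
      have := hint x 0 hx0 hxx h0mem
      simp only [zero_mul] at this
      exact this
    have hdint := hint x y hx0 hxx hyI
    have hdiffeq : (v (x₀, yt) - v (x, y)) - (v (x₀, 0) - v (x, 0))
        = ∫ ξ in x..x₀, (f (ξ, y * (ξ / x) ^ r₁) / (ξ:ℂ) - φ ξ) := by
      rw [intervalIntegral.integral_sub hdint hφii, ← k1, ← k2]
    -- Term 1
    have hT1 : ‖v (x₀, yt) - v (x₀, 0)‖ ≤ M * y₀ / x₀ ^ r' * x ^ r' := by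
      have h1 := hMv yt hytI
      have hθ0 : (0:ℝ) ≤ (x₀ / x) ^ r₁ := Real.rpow_nonneg (by positivity) _
      have h2 : |yt| ≤ y₀ * (x₀ / x) ^ r₁ := by
        rw [hytdef, abs_mul, abs_of_nonneg hθ0]
        exact mul_le_mul_of_nonneg_right (abs_le.2 hyI) hθ0
      have h3 : (x₀ / x) ^ r₁ ≤ x ^ r' / x₀ ^ r' := by
        have e1 : (x₀ / x) ^ r₁ = (x / x₀) ^ (-r₁) := by
          rw [Real.rpow_neg (by positivity), ← Real.inv_rpow (by positivity), inv_div]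
        rw [e1, ← Real.div_rpow hx0.le hx.le]
        exact Real.rpow_le_rpow_of_exponent_ge (by positivity) ((div_le_one hx).2 hxx) hr1
      calc ‖v (x₀, yt) - v (x₀, 0)‖ ≤ M * |yt| := h1
        _ ≤ M * (y₀ * ((x₀ / x) ^ r₁)) := mul_le_mul_of_nonneg_left h2 hM0
        _ ≤ M * (y₀ * (x ^ r' / x₀ ^ r')) :=
            mul_le_mul_of_nonneg_left (mul_le_mul_of_nonneg_left h3 hy.le) hM0
        _ = M * y₀ / x₀ ^ r' * x ^ r' := by ring
    -- Term 2
    have hT2 : ‖∫ ξ in x..x₀, (f (ξ, y * (ξ / x) ^ r₁) / (ξ:ℂ) - φ ξ)‖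
        ≤ C * y₀ * x₀ ^ (s - r') / (s - r') * x ^ r' := by
      have hgint : IntervalIntegrable (fun ξ : ℝ => (C * y₀ * x ^ r') * ξ ^ (s - r' - 1))
          MeasureTheory.volume x x₀ :=
        (intervalIntegral.intervalIntegrable_rpow' (by linarith)).const_mul _
      have hptwise : ∀ ξ ∈ Set.Ioc x x₀, ‖f (ξ, y * (ξ / x) ^ r₁) / (ξ:ℂ) - φ ξ‖
          ≤ (C * y₀ * x ^ r') * ξ ^ (s - r' - 1) := by
        intro ξ hξ
        have hξ0 : 0 < ξ := lt_trans hx0 hξ.1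
        have hξx : x ≤ ξ := hξ.1.le
        have hξx₀ : ξ ≤ x₀ := hξ.2
        have hmemξ := hmem x y ξ hx0 hxx hyI ⟨hξx, hξx₀⟩
        have hθ0 : (0:ℝ) ≤ (ξ / x) ^ r₁ := Real.rpow_nonneg (by positivity) _
        have e0 : f (ξ, y * (ξ / x) ^ r₁) / (ξ:ℂ) - φ ξ
            = (f (ξ, y * (ξ / x) ^ r₁) - f (ξ, 0)) / (ξ:ℂ) := by
          rw [hφdef]; ring
        have hnum : ‖f (ξ, y * (ξ / x) ^ r₁) - f (ξ, 0)‖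
            ≤ (C * ξ ^ s) * (y₀ * ((ξ / x) ^ r₁)) := by
          refine (hMf ξ ⟨hξ0, hξx₀⟩ (y * (ξ / x) ^ r₁) hmemξ.2).trans ?_
          rw [abs_mul, abs_of_nonneg hθ0]
          exact mul_le_mul_of_nonneg_left
            (mul_le_mul_of_nonneg_right (abs_le.2 hyI) hθ0) (by positivity)
        have hθle : (ξ / x) ^ r₁ ≤ x ^ r' / ξ ^ r' := by
          have e1 : (ξ / x) ^ r₁ = (x / ξ) ^ (-r₁) := by
            rw [Real.rpow_neg (by positivity), ← Real.inv_rpow (by positivity), inv_div]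
          rw [e1, ← Real.div_rpow hx0.le hξ0.le]
          exact Real.rpow_le_rpow_of_exponent_ge (by positivity) ((div_le_one hξ0).2 hξx) hr1
        have hnn : ‖f (ξ, y * (ξ / x) ^ r₁) / (ξ:ℂ) - φ ξ‖
            = ‖f (ξ, y * (ξ / x) ^ r₁) - f (ξ, 0)‖ / ξ := by
          rw [e0, norm_div, Complex.norm_real, Real.norm_eq_abs, abs_of_pos hξ0]
        rw [hnn]
        have hstep : ‖f (ξ, y * (ξ / x) ^ r₁) - f (ξ, 0)‖ / ξ
            ≤ ((C * ξ ^ s) * (y₀ * (x ^ r' / ξ ^ r'))) / ξ := by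
          gcongr
          refine hnum.trans ?_
          exact mul_le_mul_of_nonneg_left (mul_le_mul_of_nonneg_left hθle hy.le)
            (mul_nonneg hC (Real.rpow_nonneg hξ0.le _))
        refine hstep.trans (le_of_eq ?_)
        have h1 : ξ ^ (s - r' - 1) = ξ ^ s / ξ ^ r' / ξ := by
          rw [show s - r' - 1 = s - r' - 1 from rfl, Real.rpow_sub hξ0, Real.rpow_sub hξ0,
            Real.rpow_one]
        rw [h1]
        have hξr' : (0:ℝ) < ξ ^ r' := Real.rpow_pos_of_pos hξ0 _
        field_simp
      have hbound := intervalIntegral.norm_integral_le_abs_of_norm_le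
        (f := fun ξ : ℝ => f (ξ, y * (ξ / x) ^ r₁) / (ξ:ℂ) - φ ξ)
        (g := fun ξ : ℝ => (C * y₀ * x ^ r') * ξ ^ (s - r' - 1))
        ((MeasureTheory.ae_restrict_iff' measurableSet_uIoc).2
          (Filter.Eventually.of_forall (fun ξ hξ =>
            hptwise ξ (by rwa [Set.uIoc_of_le hxx] at hξ)))) hgint
      refine hbound.trans ?_
      have hgval : (∫ ξ in x..x₀, (C * y₀ * x ^ r') * ξ ^ (s - r' - 1))
          = (C * y₀ * x ^ r') * ((x₀ ^ (s - r') - x ^ (s - r')) / (s - r')) := by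
        rw [intervalIntegral.integral_const_mul, integral_rpow (Or.inl (by linarith))]
        have e : s - r' - 1 + 1 = s - r' := by ring
        rw [e]
      rw [hgval]
      have hxle : x ^ (s - r') ≤ x₀ ^ (s - r') := Real.rpow_le_rpow hx0.le hxx hsr.le
      have hnn2 : (0:ℝ) ≤ (C * y₀ * x ^ r') * ((x₀ ^ (s - r') - x ^ (s - r')) / (s - r')) := by
        apply mul_nonneg (by positivity)
        apply div_nonneg (by linarith) hsr.le
      rw [abs_of_nonneg hnn2]
      calc (C * y₀ * x ^ r') * ((x₀ ^ (s - r') - x ^ (s - r')) / (s - r'))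
          ≤ (C * y₀ * x ^ r') * (x₀ ^ (s - r') / (s - r')) := by
            apply mul_le_mul_of_nonneg_left _ (by positivity)
            refine (div_le_div_iff_of_pos_right hsr).2 ?_
            linarith [Real.rpow_nonneg hx0.le (s - r')]
        _ = C * y₀ * x₀ ^ (s - r') / (s - r') * x ^ r' := by ring
    -- Term 3
    have hT3 : ‖v (x, 0) - a₀‖ ≤ C / s * x₀ ^ (s - r') * x ^ r' := by
      rw [hax x hxI]
      refine (htail x hxI).trans ?_
      have hxs : x ^ s ≤ x₀ ^ (s - r') * x ^ r' := by
        have e : x ^ s = x ^ (s - r') * x ^ r' := by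
          rw [← Real.rpow_add hx0]; congr 1; ring
        rw [e]
        exact mul_le_mul_of_nonneg_right (Real.rpow_le_rpow hx0.le hxx hsr.le) hxr'pos.le
      calc C / s * x ^ s ≤ C / s * (x₀ ^ (s - r') * x ^ r') :=
            mul_le_mul_of_nonneg_left hxs (by positivity)
        _ = C / s * x₀ ^ (s - r') * x ^ r' := by ring
    -- assemble
    have hsplitv : v (x, y) - a₀
        = (v (x₀, yt) - v (x₀, 0)) - ((v (x₀, yt) - v (x, y)) - (v (x₀, 0) - v (x, 0)))
          + (v (x, 0) - a₀) := by ring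
    calc ‖v (x, y) - a₀‖
        ≤ ‖v (x₀, yt) - v (x₀, 0)‖
            + ‖∫ ξ in x..x₀, (f (ξ, y * (ξ / x) ^ r₁) / (ξ:ℂ) - φ ξ)‖
            + ‖v (x, 0) - a₀‖ := by
          rw [hsplitv, hdiffeq]
          exact (norm_add_le _ _).trans (add_le_add (norm_sub_le _ _) le_rfl)
      _ ≤ M * y₀ / x₀ ^ r' * x ^ r' + C * y₀ * x₀ ^ (s - r') / (s - r') * x ^ r'
            + C / s * x₀ ^ (s - r') * x ^ r' := by
          exact add_le_add (add_le_add hT1 hT2) hT3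
      _ = (M * y₀ / x₀ ^ r' + C * y₀ * x₀ ^ (s - r') / (s - r') + C / s * x₀ ^ (s - r'))
            * x ^ r' := by ring
  refine ⟨a₀, hbound_all, ?_⟩
  intro y hyI
  have hmin : 0 < min (-r₁) s := lt_min (by linarith) hs
  obtain ⟨C', hC'0, hC'⟩ := hbound_all (min (-r₁) s / 2) (by linarith)
  rw [tendsto_iff_norm_sub_tendsto_zero]
  have hglim : Filter.Tendsto (fun t : ℝ => C' * t ^ (min (-r₁) s / 2))
      (nhdsWithin 0 (Set.Ioi 0)) (nhds 0) := by
    have hc : ContinuousAt (fun t : ℝ => t ^ (min (-r₁) s / 2)) 0 :=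
      Real.continuousAt_rpow_const 0 _ (Or.inr (by positivity))
    have h2 : Filter.Tendsto (fun t : ℝ => t ^ (min (-r₁) s / 2))
        (nhdsWithin 0 (Set.Ioi 0)) (nhds ((0:ℝ) ^ (min (-r₁) s / 2))) :=
      hc.tendsto.mono_left nhdsWithin_le_nhds
    have h3 := h2.const_mul C'
    simpa [Real.zero_rpow (by positivity : (0:ℝ) < min (-r₁) s / 2).ne'] using h3
  apply tendsto_of_tendsto_of_tendsto_of_le_of_le' tendsto_const_nhds hglim
  · exact Filter.Eventually.of_forall (fun t => norm_nonneg _)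
  · refine Filter.eventually_of_mem (Ioc_mem_nhdsGT_of_mem ⟨le_refl 0, hx⟩) ?_
    intro t ht
    exact hC' (t, y) ⟨ht, hyI⟩
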